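/- For every integer n ≥ 3, the brush number of C_3 × C_n equals 2n + 2. -/

import Mathlib

open Finset SimpleGraph

open scoped Classical in
/-- The number of brushes needed at `v` in the cleaning process induced by the
ordering `σ` of the vertices: `max (0, d⁺(v) - d⁻(v))` (truncated `ℕ` subtraction),
where `d⁺(v)` counts neighbours `u` with `σ v < σ u` and `d⁻(v)` those with `σ u < σ v`. -/
noncomputable def brushWeight {V : Type} [Fintype V] (G : SimpleGraph V)
    (σ : V ≃ Fin (Fintype.card V)) (v : V) : ℕ :=
  (Finset.univ.filter (fun u => G.Adj v u ∧ σ v < σ u)).card -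
    (Finset.univ.filter (fun u => G.Adj v u ∧ σ u < σ v)).card

/-- The brush number of `G`: the minimum over all orderings `σ` of the vertices of
the total number of brushes `∑ v, w_σ(v)`. -/
noncomputable def brushNumber {V : Type} [Fintype V] (G : SimpleGraph V) : ℕ :=
  ⨅ σ : V ≃ Fin (Fintype.card V), ∑ v, brushWeight G σ v

section BrushAux

variable {m : ℕ}

/- ### Arithmetic facts about `Fin (m+3)` and `Fin 3` -/

lemma brush_fin_one_ne_zero : (1 : Fin (m+3)) ≠ 0 := by
  rw [Ne, Fin.ext_iff, Fin.val_one]; simp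

lemma brush_fin_two_ne_zero : (1 + 1 : Fin (m+3)) ≠ 0 := by
  have h : ((1 + 1 : Fin (m+3))).val = 2 := by
    rw [Fin.val_add, Fin.val_one]
    exact Nat.mod_eq_of_lt (by omega)
  intro hc; rw [hc] at h; simp at h

lemma brush_fin_add_one_ne (j : Fin (m+3)) : j + 1 ≠ j := by
  intro h
  exact brush_fin_one_ne_zero (add_left_cancel (a := j) (by rw [h, add_zero]))

lemma brush_fin_sub_one (j : Fin (m+3)) : (j - 1) + 1 = j := by abel

lemma brush_fin_add_sub_one (j : Fin (m+3)) : (j + 1) - 1 = j := by abel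

lemma brush_fin_sub_one_ne (j : Fin (m+3)) : j - 1 ≠ j := by
  intro h
  have h2 : j = j + 1 := by
    calc j = (j - 1) + 1 := (brush_fin_sub_one j).symm
    _ = j + 1 := by rw [h]
  exact brush_fin_add_one_ne j h2.symm

lemma brush_fin_add_ne_sub (j : Fin (m+3)) : j + 1 ≠ j - 1 := by
  intro h
  have h2 : j + (1 + 1) = j + 0 := by rw [add_zero, ← add_assoc, h, brush_fin_sub_one]
  exact brush_fin_two_ne_zero (add_left_cancel h2)

lemma brush_fin3_cov (i i' : Fin 3) : i' = i ∨ i' = i + 1 ∨ i' = i + 2 := by revert i i'; decide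
lemma brush_fin3_ne1 (i : Fin 3) : i + 1 ≠ i := by revert i; decide
lemma brush_fin3_ne2 (i : Fin 3) : i + 2 ≠ i := by revert i; decide
lemma brush_fin3_ne12 (i : Fin 3) : i + 1 ≠ i + 2 := by revert i; decide

/- ### Adjacency in the torus `C_3 □ C_(m+3)` -/

lemma brush_cyc_adj (j j' : Fin (m+3)) :
    (cycleGraph (m+3)).Adj j j' ↔ j' = j + 1 ∨ j' = j - 1 := by
  have h : (cycleGraph (m+3)).Adj j j' ↔ j - j' = 1 ∨ j' - j = 1 := cycleGraph_adj (n := m+1)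
  rw [h]
  constructor
  · rintro (h | h)
    · right; rw [← h]; abel
    · left; rw [← h]; abel
  · rintro (h | h)
    · right; rw [h]; abel
    · left; rw [h]; abel

lemma brush_adj_iff (i i' : Fin 3) (j j' : Fin (m+3)) :
    (cycleGraph 3 □ cycleGraph (m+3)).Adj (i,j) (i',j') ↔
      (i' ≠ i ∧ j' = j) ∨ ((j' = j + 1 ∨ j' = j - 1) ∧ i' = i) := by
  rw [boxProd_adj]
  simp only [cycleGraph_three_eq_top, top_adj, brush_cyc_adj]
  constructor
  · rintro (⟨h1, h2⟩ | ⟨h1, h2⟩)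
    · exact Or.inl ⟨Ne.symm h1, h2.symm⟩
    · exact Or.inr ⟨h1, h2.symm⟩
  · rintro (⟨h1, h2⟩ | ⟨h1, h2⟩)
    · exact Or.inl ⟨Ne.symm h1, h2.symm⟩
    · exact Or.inr ⟨h1, h2.symm⟩

lemma brush_mem4 (i : Fin 3) (j : Fin (m+3)) (u : Fin 3 × Fin (m+3)) :
    (cycleGraph 3 □ cycleGraph (m+3)).Adj (i,j) u ↔
      u = (i+1,j) ∨ u = (i+2,j) ∨ u = (i,j+1) ∨ u = (i,j-1) := by
  obtain ⟨i', j'⟩ := u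
  rw [brush_adj_iff]
  simp only [Prod.mk.injEq]
  constructor
  · rintro (⟨h1, h2⟩ | ⟨h1, h2⟩)
    · rcases brush_fin3_cov i i' with h | h | h
      · exact absurd h h1
      · exact Or.inl ⟨h, h2⟩
      · exact Or.inr (Or.inl ⟨h, h2⟩)
    · rcases h1 with h | h
      · exact Or.inr (Or.inr (Or.inl ⟨h2, h⟩))
      · exact Or.inr (Or.inr (Or.inr ⟨h2, h⟩))
  · rintro (⟨h1, h2⟩ | ⟨h1, h2⟩ | ⟨h1, h2⟩ | ⟨h1, h2⟩)
    · exact Or.inl ⟨h1 ▸ brush_fin3_ne1 i, h2⟩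
    · exact Or.inl ⟨h1 ▸ brush_fin3_ne2 i, h2⟩
    · exact Or.inr ⟨Or.inl h2, h1⟩
    · exact Or.inr ⟨Or.inr h2, h1⟩

/- ### Counting neighbours -/

lemma brush_count4 (i : Fin 3) (j : Fin (m+3)) (Q : Fin 3 × Fin (m+3) → Prop) [DecidablePred Q]
    {inst : DecidablePred fun u : Fin 3 × Fin (m+3) =>
      (cycleGraph 3 □ cycleGraph (m+3)).Adj (i,j) u ∧ Q u} :
    (@Finset.filter _ _ inst Finset.univ).card =
      (if Q (i+1,j) then 1 else 0) + (if Q (i+2,j) then 1 else 0) +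
      (if Q (i,j+1) then 1 else 0) + (if Q (i,j-1) then 1 else 0) := by
  have hset : (@Finset.filter _ _ inst Finset.univ) =
      ({(i+1,j), (i+2,j), (i,j+1), (i,j-1)} : Finset (Fin 3 × Fin (m+3))).filter Q := by
    ext u
    simp only [Finset.mem_filter, Finset.mem_univ, true_and, Finset.mem_insert,
      Finset.mem_singleton, brush_mem4 i j]
  rw [hset, Finset.card_filter]
  have d1 : ((i+1 : Fin 3), j) ∉ ({(i+2,j), (i,j+1), (i,j-1)} : Finset (Fin 3 × Fin (m+3))) := by
    simp [Prod.ext_iff, brush_fin3_ne12 i, (brush_fin3_ne1 i)]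
  have d2 : ((i+2 : Fin 3), j) ∉ ({(i,j+1), (i,j-1)} : Finset (Fin 3 × Fin (m+3))) := by
    simp [Prod.ext_iff, brush_fin3_ne2 i]
  have d3 : ((i : Fin 3), j+1) ∉ ({(i,j-1)} : Finset (Fin 3 × Fin (m+3))) := by
    simp [Prod.ext_iff, brush_fin_add_ne_sub j]
  rw [show ({(i+1,j), (i+2,j), (i,j+1), (i,j-1)} : Finset (Fin 3 × Fin (m+3)))
      = insert (i+1,j) (insert (i+2,j) (insert (i,j+1) {(i,j-1)})) from rfl]
  rw [Finset.sum_insert d1, Finset.sum_insert d2, Finset.sum_insert d3, Finset.sum_singleton]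
  ring

/-- The brush weight of a vertex of the torus, as `2·(outdegree) - 4`. -/
lemma brush_bw_eq (σ : (Fin 3 × Fin (m+3)) ≃ Fin (Fintype.card (Fin 3 × Fin (m+3))))
    (i : Fin 3) (j : Fin (m+3)) :
    brushWeight (cycleGraph 3 □ cycleGraph (m+3)) σ (i,j) =
      2 * ((if σ (i,j) < σ (i+1,j) then 1 else 0) + (if σ (i,j) < σ (i+2,j) then 1 else 0) +
      (if σ (i,j) < σ (i,j+1) then 1 else 0) + (if σ (i,j) < σ (i,j-1) then 1 else 0)) - 4 := by
  have key : ∀ u : Fin 3 × Fin (m+3), u ≠ (i,j) →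
      ((if σ (i,j) < σ u then 1 else 0) + (if σ u < σ (i,j) then 1 else 0)) = 1 := by
    intro u hu
    have h : σ (i,j) ≠ σ u := fun h => hu (σ.injective h.symm)
    rcases h.lt_or_gt with h | h
    · simp [h, asymm h]
    · simp [h, asymm h]
  rw [brushWeight]
  rw [brush_count4 i j (fun u => σ (i,j) < σ u), brush_count4 i j (fun u => σ u < σ (i,j))]
  have k1 := key (i+1,j) (by simp [Prod.ext_iff, brush_fin3_ne1 i])
  have k2 := key (i+2,j) (by simp [Prod.ext_iff, brush_fin3_ne2 i])
  have k3 := key (i,j+1) (by simp [Prod.ext_iff])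
  have k4 := key (i,j-1) (by simp [Prod.ext_iff])
  omega

/- ### Sorting three values -/

lemma brush_sort3 {α : Type*} [LinearOrder α] (f : Fin 3 → α)
    (hne : ∀ i i' : Fin 3, i ≠ i' → f i ≠ f i') :
    ∃ a b c : Fin 3, (∀ i, i = a ∨ i = b ∨ i = c) ∧ f a < f b ∧ f b < f c := by
  rcases (hne 0 1 (by decide)).lt_or_gt with h01 | h10 <;>
    rcases (hne 0 2 (by decide)).lt_or_gt with h02 | h20 <;>
      rcases (hne 1 2 (by decide)).lt_or_gt with h12 | h21
  · exact ⟨0, 1, 2, by decide, h01, h12⟩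
  · exact ⟨0, 2, 1, by decide, h02, h21⟩
  · exact absurd h20 (asymm (h01.trans h12))
  · exact ⟨2, 0, 1, by decide, h20, h01⟩
  · exact ⟨1, 0, 2, by decide, h10, h02⟩
  · exact absurd h10 (asymm (h02.trans h21))
  · exact ⟨1, 2, 0, by decide, h12, h20⟩
  · exact ⟨2, 1, 0, by decide, h21, h10⟩

/- ### The lower bound -/

open scoped Classical in
lemma brush_lower_bound (σ : (Fin 3 × Fin (m+3)) ≃ Fin (Fintype.card (Fin 3 × Fin (m+3)))) :
    2 * (m+3) + 2 ≤ ∑ v, brushWeight (cycleGraph 3 □ cycleGraph (m+3)) σ v := by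
  have hvne : ∀ (i i' : Fin 3) (j j' : Fin (m+3)), (i,j) ≠ ((i',j') : Fin 3 × Fin (m+3)) →
      σ (i,j) ≠ σ (i',j') := fun i i' j j' h hc => h (σ.injective hc)
  obtain ⟨s, md, t, cov⟩ : ∃ s md t : Fin (m+3) → Fin 3,
      ∀ j, (∀ i, i = s j ∨ i = md j ∨ i = t j) ∧
        σ (s j, j) < σ (md j, j) ∧ σ (md j, j) < σ (t j, j) := by
    have hex : ∀ j : Fin (m+3), ∃ a b c : Fin 3,
        (∀ i, i = a ∨ i = b ∨ i = c) ∧ σ (a,j) < σ (b,j) ∧ σ (b,j) < σ (c,j) := fun j =>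
      brush_sort3 (fun i => σ (i,j))
        (fun i i' h => hvne i i' j j (fun hc => h (congrArg Prod.fst hc)))
    choose s md t h1 h2 h3 using hex
    exact ⟨s, md, t, fun j => ⟨h1 j, h2 j, h3 j⟩⟩
  have colmin : ∀ (j : Fin (m+3)) (i : Fin 3), σ (s j, j) ≤ σ (i, j) := by
    intro j i
    rcases (cov j).1 i with h | h | h
    · rw [h]
    · rw [h]; exact ((cov j).2.1).le
    · rw [h]; exact (((cov j).2.1).trans ((cov j).2.2)).le
  have hsmd : ∀ j, s j ≠ md j := by
    intro j h
    exact absurd (h ▸ (cov j).2.1) (lt_irrefl _)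
  have pair1 : ∀ j : Fin (m+3),
      (if σ (s j, j+1) < σ (s j, j) then (1:ℕ) else 0) +
      (if σ (s j, j) < σ (s j, j+1) then (1:ℕ) else 0) = 1 := by
    intro j
    have hne : σ (s j, j+1) ≠ σ (s j, j) :=
      hvne _ _ _ _ (fun hc => brush_fin_add_one_ne j (congrArg Prod.snd hc))
    rcases hne.lt_or_gt with h | h
    · rw [if_pos h, if_neg (asymm h)]
    · rw [if_neg (asymm h), if_pos h]
  have pair2 : ∀ j : Fin (m+3),
      (if σ (s j, j-1) < σ (s j, j) then (1:ℕ) else 0) +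
      (if σ (s j, j) < σ (s j, j-1) then (1:ℕ) else 0) = 1 := by
    intro j
    have hne : σ (s j, j-1) ≠ σ (s j, j) :=
      hvne _ _ _ _ (fun hc => brush_fin_sub_one_ne j (congrArg Prod.snd hc))
    rcases hne.lt_or_gt with h | h
    · rw [if_pos h, if_neg (asymm h)]
    · rw [if_neg (asymm h), if_pos h]
  have bwS : ∀ j : Fin (m+3), brushWeight (cycleGraph 3 □ cycleGraph (m+3)) σ (s j, j) =
      2 * ((if σ (s j, j) < σ (s j, j+1) then 1 else 0) +
           (if σ (s j, j) < σ (s j, j-1) then 1 else 0)) := by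
    intro j
    have h1 : σ (s j, j) < σ (s j + 1, j) :=
      lt_of_le_of_ne (colmin j _)
        (hvne _ _ _ _ (fun hc => brush_fin3_ne1 (s j) (congrArg Prod.fst hc).symm))
    have h2 : σ (s j, j) < σ (s j + 2, j) :=
      lt_of_le_of_ne (colmin j _)
        (hvne _ _ _ _ (fun hc => brush_fin3_ne2 (s j) (congrArg Prod.fst hc).symm))
    rw [brush_bw_eq, if_pos h1, if_pos h2]
    omega
  have bwM : ∀ j : Fin (m+3),
      2 * (if σ (md j, j) < σ (md j, j+1) ∧ σ (md j, j) < σ (md j, j-1) then (1:ℕ) else 0) ≤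
      brushWeight (cycleGraph 3 □ cycleGraph (m+3)) σ (md j, j) := by
    intro j
    by_cases hc : σ (md j, j) < σ (md j, j+1) ∧ σ (md j, j) < σ (md j, j-1)
    · rw [if_pos hc, brush_bw_eq]
      have htc : t j = md j + 1 ∨ t j = md j + 2 := by
        rcases brush_fin3_cov (md j) (t j) with h | h | h
        · exact absurd ((h ▸ (cov j).2.2)) (lt_irrefl _)
        · exact Or.inl h
        · exact Or.inr h
      rw [if_pos hc.1, if_pos hc.2]
      rcases htc with h | h
      · rw [← h, if_pos ((cov j).2.2)]; omega
      · rw [← h, if_pos ((cov j).2.2)]; omega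
    · rw [if_neg hc]; omega
  have sum_ge : ∑ j, brushWeight (cycleGraph 3 □ cycleGraph (m+3)) σ (s j, j) +
      ∑ j, brushWeight (cycleGraph 3 □ cycleGraph (m+3)) σ (md j, j) ≤
      ∑ v, brushWeight (cycleGraph 3 □ cycleGraph (m+3)) σ v := by
    have hinj1 : ∀ x ∈ (univ : Finset (Fin (m+3))), ∀ y ∈ univ,
        ((s x, x) : Fin 3 × Fin (m+3)) = (s y, y) → x = y :=
      fun x _ y _ h => congrArg Prod.snd h
    have hinj2 : ∀ x ∈ (univ : Finset (Fin (m+3))), ∀ y ∈ univ,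
        ((md x, x) : Fin 3 × Fin (m+3)) = (md y, y) → x = y :=
      fun x _ y _ h => congrArg Prod.snd h
    have hdisj : Disjoint (univ.image fun j : Fin (m+3) => ((s j, j) : Fin 3 × Fin (m+3)))
        (univ.image fun j : Fin (m+3) => ((md j, j) : Fin 3 × Fin (m+3))) := by
      rw [Finset.disjoint_left]
      rintro a ha hb
      simp only [Finset.mem_image, Finset.mem_univ, true_and] at ha hb
      obtain ⟨j, rfl⟩ := ha
      obtain ⟨j', hj'⟩ := hb
      have h2 : j' = j := congrArg Prod.snd hj'
      have h1 : md j' = s j := congrArg Prod.fst hj'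
      rw [h2] at h1
      exact hsmd j h1.symm
    rw [← Finset.sum_image hinj1, ← Finset.sum_image hinj2, ← Finset.sum_union hdisj]
    exact Finset.sum_le_sum_of_subset (Finset.subset_univ _)
  have reidx : ∑ j : Fin (m+3), (if σ (s j, j-1) < σ (s j, j) then (1:ℕ) else 0) =
      ∑ j : Fin (m+3), (if σ (s (j+1), j) < σ (s (j+1), j+1) then (1:ℕ) else 0) := by
    refine (Fintype.sum_equiv (Equiv.addRight (1 : Fin (m+3))) _ _ ?_).symm
    intro j
    simp only [Equiv.coe_addRight, brush_fin_add_sub_one]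
  have hLR : ∀ j : Fin (m+3), (if σ (s j, j+1) < σ (s j, j) then (1:ℕ) else 0) +
      (if σ (s (j+1), j) < σ (s (j+1), j+1) then (1:ℕ) else 0) ≤ 1 := by
    intro j
    by_cases h1 : σ (s j, j+1) < σ (s j, j)
    · by_cases h2 : σ (s (j+1), j) < σ (s (j+1), j+1)
      · exfalso
        have c1 : σ (s (j+1), j+1) ≤ σ (s j, j+1) := colmin (j+1) (s j)
        have c2 : σ (s j, j) ≤ σ (s (j+1), j) := colmin j (s (j+1))
        exact absurd (((c1.trans_lt h1).trans_le c2).trans h2) (lt_irrefl _)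
      · rw [if_pos h1, if_neg h2]
    · rw [if_neg h1]
      by_cases h2 : σ (s (j+1), j) < σ (s (j+1), j+1) <;> simp [h2]
  have hkey : (∑ j : Fin (m+3), (if σ (s j, j+1) < σ (s j, j) then (1:ℕ) else 0)) +
      (∑ j : Fin (m+3), (if σ (s (j+1), j) < σ (s (j+1), j+1) then (1:ℕ) else 0)) + 1 ≤
      (m+3) + ∑ j : Fin (m+3),
        (if σ (md j, j) < σ (md j, j+1) ∧ σ (md j, j) < σ (md j, j-1) then (1:ℕ) else 0) := by
    rw [← Finset.sum_add_distrib]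
    obtain ⟨j₀, -, hmin⟩ := Finset.exists_min_image (univ : Finset (Fin (m+3)))
      (fun j => σ (md j, j)) ⟨0, Finset.mem_univ 0⟩
    have small_source : ∀ (i : Fin 3) (j : Fin (m+3)), σ (i, j) < σ (md j₀, j₀) → i = s j := by
      intro i j hlt
      rcases (cov j).1 i with h | h | h
      · exact h
      · exact absurd (h ▸ hlt) (not_lt.mpr (hmin j (Finset.mem_univ j)))
      · exact absurd (((cov j).2.2.trans (h ▸ hlt))) (not_lt.mpr (hmin j (Finset.mem_univ j)))
    by_cases hM : σ (md j₀, j₀) < σ (md j₀, j₀+1) ∧ σ (md j₀, j₀) < σ (md j₀, j₀-1)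
    · have h1 : (1:ℕ) ≤ ∑ j : Fin (m+3),
          (if σ (md j, j) < σ (md j, j+1) ∧ σ (md j, j) < σ (md j, j-1) then (1:ℕ) else 0) := by
        calc (1:ℕ) = if σ (md j₀, j₀) < σ (md j₀, j₀+1) ∧ σ (md j₀, j₀) < σ (md j₀, j₀-1)
            then (1:ℕ) else 0 := by rw [if_pos hM]
        _ ≤ _ := Finset.single_le_sum (f := fun j =>
            (if σ (md j, j) < σ (md j, j+1) ∧ σ (md j, j) < σ (md j, j-1) then (1:ℕ) else 0))
            (fun _ _ => Nat.zero_le _) (Finset.mem_univ j₀)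
      have h2 : ∑ j : Fin (m+3), ((if σ (s j, j+1) < σ (s j, j) then (1:ℕ) else 0) +
          (if σ (s (j+1), j) < σ (s (j+1), j+1) then (1:ℕ) else 0)) ≤ m + 3 := by
        calc _ ≤ ∑ _j : Fin (m+3), 1 := Finset.sum_le_sum (fun j _ => hLR j)
        _ = m + 3 := by simp
      omega
    · have hmdne1 : σ (md j₀, j₀) ≠ σ (md j₀, j₀+1) :=
        (hvne _ _ _ _ (fun hc => brush_fin_add_one_ne j₀ (congrArg Prod.snd hc).symm))
      have hmdne2 : σ (md j₀, j₀) ≠ σ (md j₀, j₀-1) :=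
        (hvne _ _ _ _ (fun hc => brush_fin_sub_one_ne j₀ (congrArg Prod.snd hc).symm))
      have hsource : σ (s j₀, j₀) < σ (md j₀, j₀) := (cov j₀).2.1
      have huncounted : ∃ j₁ : Fin (m+3),
          (if σ (s j₁, j₁+1) < σ (s j₁, j₁) then (1:ℕ) else 0) +
          (if σ (s (j₁+1), j₁) < σ (s (j₁+1), j₁+1) then (1:ℕ) else 0) = 0 := by
        rw [not_and_or] at hM
        rcases hM with hM | hM
        · have hw : σ (md j₀, j₀+1) < σ (md j₀, j₀) := (not_lt.mp hM).lt_of_ne hmdne1.symm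
          have hr : md j₀ = s (j₀+1) := small_source (md j₀) (j₀+1) hw
          refine ⟨j₀, ?_⟩
          have hRz : ¬ σ (s (j₀+1), j₀) < σ (s (j₀+1), j₀+1) := by
            rw [← hr]
            exact asymm hw
          have hLz : ¬ σ (s j₀, j₀+1) < σ (s j₀, j₀) := by
            intro hc
            have h1 : σ (s j₀, j₀+1) < σ (md j₀, j₀) := hc.trans hsource
            have h2 : s j₀ = s (j₀+1) := small_source (s j₀) (j₀+1) h1
            exact hsmd j₀ (by rw [h2, ← hr])
          rw [if_neg hLz, if_neg hRz]
        · have hw : σ (md j₀, j₀-1) < σ (md j₀, j₀) := (not_lt.mp hM).lt_of_ne hmdne2.symm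
          have hr : md j₀ = s (j₀-1) := small_source (md j₀) (j₀-1) hw
          refine ⟨j₀ - 1, ?_⟩
          rw [brush_fin_sub_one j₀]
          have hLz : ¬ σ (s (j₀-1), j₀) < σ (s (j₀-1), j₀-1) := by
            rw [← hr]
            exact asymm hw
          have hRz : ¬ σ (s j₀, j₀-1) < σ (s j₀, j₀) := by
            intro hc
            have h1 : σ (s j₀, j₀-1) < σ (md j₀, j₀) := hc.trans hsource
            have h2 : s j₀ = s (j₀-1) := small_source (s j₀) (j₀-1) h1
            exact hsmd j₀ (by rw [h2, ← hr])
          rw [if_neg hLz, if_neg hRz]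
      obtain ⟨j₁, hj₁⟩ := huncounted
      have hsplit : ∑ j : Fin (m+3), ((if σ (s j, j+1) < σ (s j, j) then (1:ℕ) else 0) +
          (if σ (s (j+1), j) < σ (s (j+1), j+1) then (1:ℕ) else 0)) ≤ m + 2 := by
        rw [← Finset.add_sum_erase _ _ (Finset.mem_univ j₁), hj₁, zero_add]
        calc _ ≤ ∑ _j ∈ univ.erase j₁, 1 := Finset.sum_le_sum (fun j _ => hLR j)
        _ = m + 2 := by
          rw [Finset.sum_const, smul_eq_mul, mul_one,
            Finset.card_erase_of_mem (Finset.mem_univ j₁)]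
          simp
      omega
  have e1 : (∑ j : Fin (m+3), (if σ (s j, j+1) < σ (s j, j) then (1:ℕ) else 0)) +
      (∑ j : Fin (m+3), (if σ (s j, j) < σ (s j, j+1) then (1:ℕ) else 0)) = m + 3 := by
    rw [← Finset.sum_add_distrib]
    calc _ = ∑ _j : Fin (m+3), (1:ℕ) := Finset.sum_congr rfl (fun j _ => pair1 j)
    _ = m + 3 := by simp
  have e2 : (∑ j : Fin (m+3), (if σ (s j, j-1) < σ (s j, j) then (1:ℕ) else 0)) +
      (∑ j : Fin (m+3), (if σ (s j, j) < σ (s j, j-1) then (1:ℕ) else 0)) = m + 3 := by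
    rw [← Finset.sum_add_distrib]
    calc _ = ∑ _j : Fin (m+3), (1:ℕ) := Finset.sum_congr rfl (fun j _ => pair2 j)
    _ = m + 3 := by simp
  have e3 : ∑ j, brushWeight (cycleGraph 3 □ cycleGraph (m+3)) σ (s j, j) =
      2 * ((∑ j : Fin (m+3), (if σ (s j, j) < σ (s j, j+1) then (1:ℕ) else 0)) +
           (∑ j : Fin (m+3), (if σ (s j, j) < σ (s j, j-1) then (1:ℕ) else 0))) := by
    rw [← Finset.sum_add_distrib, Finset.mul_sum]
    exact Finset.sum_congr rfl (fun j _ => bwS j)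
  have e4 : 2 * (∑ j : Fin (m+3),
      (if σ (md j, j) < σ (md j, j+1) ∧ σ (md j, j) < σ (md j, j-1) then (1:ℕ) else 0)) ≤
      ∑ j, brushWeight (cycleGraph 3 □ cycleGraph (m+3)) σ (md j, j) := by
    rw [Finset.mul_sum]
    exact Finset.sum_le_sum (fun j _ => bwM j)
  rw [reidx] at e2
  omega

/- ### The upper bound : the column-sweep ordering -/

/-- The column-by-column ordering of the vertices of the torus. -/
noncomputable def brushSigma0 (m : ℕ) :
    (Fin 3 × Fin (m+3)) ≃ Fin (Fintype.card (Fin 3 × Fin (m+3))) :=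
  (Equiv.prodComm (Fin 3) (Fin (m+3))).trans (finProdFinEquiv.trans
    (finCongr (by rw [Fintype.card_prod, Fintype.card_fin, Fintype.card_fin, mul_comm])))

lemma brushSigma0_val (i : Fin 3) (j : Fin (m+3)) :
    ((brushSigma0 m) (i,j)).val = i.val + 3 * j.val := rfl

lemma brushSigma0_lt (i i' : Fin 3) (j j' : Fin (m+3)) :
    ((brushSigma0 m) (i,j) < (brushSigma0 m) (i',j')) ↔
      i.val + 3 * j.val < i'.val + 3 * j'.val := by
  rw [Fin.lt_def, brushSigma0_val, brushSigma0_val]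

lemma brush_upper_bound :
    ∑ v, brushWeight (cycleGraph 3 □ cycleGraph (m+3)) (brushSigma0 m) v = 2 * (m+3) + 2 := by
  have hlast0 : (Fin.last (m+2) : Fin (m+3)) ≠ 0 := by
    rw [Ne, Fin.ext_iff]
    simp [Fin.last]
  have rowcmp1 : ∀ (i : Fin 3) (j : Fin (m+3)),
      (if (brushSigma0 m) (i,j) < (brushSigma0 m) (i,j+1) then (1:ℕ) else 0) =
        (if j = Fin.last (m+2) then 0 else 1) := by
    intro i j
    by_cases h : j = Fin.last (m+2)
    · have hv : ((Fin.last (m+2) : Fin (m+3)) + 1).val = 0 := by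
        rw [Fin.val_add_one, if_pos rfl]
      have hc : ¬ (brushSigma0 m) (i,j) < (brushSigma0 m) (i,j+1) := by
        rw [brushSigma0_lt, h, hv]
        omega
      rw [if_neg hc, if_pos h]
    · have hc : (brushSigma0 m) (i,j) < (brushSigma0 m) (i,j+1) := by
        rw [brushSigma0_lt, Fin.val_add_one, if_neg h]
        omega
      rw [if_pos hc, if_neg h]
  have rowcmp2 : ∀ (i : Fin 3) (j : Fin (m+3)),
      (if (brushSigma0 m) (i,j) < (brushSigma0 m) (i,j-1) then (1:ℕ) else 0) =
        (if j = 0 then 1 else 0) := by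
    intro i j
    by_cases h : j = 0
    · have hc : (brushSigma0 m) (i,j) < (brushSigma0 m) (i,j-1) := by
        rw [brushSigma0_lt, Fin.coe_sub_one, if_pos h, h]
        simp
      rw [if_pos hc, if_pos h]
    · have hne : j.val ≠ 0 := fun hc => h (Fin.ext hc)
      have hc : ¬ (brushSigma0 m) (i,j) < (brushSigma0 m) (i,j-1) := by
        rw [brushSigma0_lt, Fin.coe_sub_one, if_neg h]
        omega
      rw [if_neg hc, if_neg h]
  have colsum : ∀ j : Fin (m+3),
      brushWeight (cycleGraph 3 □ cycleGraph (m+3)) (brushSigma0 m) (0,j) +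
      brushWeight (cycleGraph 3 □ cycleGraph (m+3)) (brushSigma0 m) (1,j) +
      brushWeight (cycleGraph 3 □ cycleGraph (m+3)) (brushSigma0 m) (2,j) =
      4 * (if j = 0 then 1 else 0) + 2 * (if j = Fin.last (m+2) then 0 else 1) := by
    intro j
    rw [brush_bw_eq, brush_bw_eq, brush_bw_eq]
    rw [show ((0:Fin 3)+1) = 1 from rfl, show ((0:Fin 3)+2) = 2 from rfl,
        show ((1:Fin 3)+1) = 2 from rfl, show ((1:Fin 3)+2) = 0 by decide,
        show ((2:Fin 3)+1) = 0 by decide, show ((2:Fin 3)+2) = 1 by decide]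
    rw [rowcmp1, rowcmp2, rowcmp1, rowcmp2, rowcmp1, rowcmp2]
    have c01 : (brushSigma0 m) ((0:Fin 3),j) < (brushSigma0 m) (1,j) := by
      rw [brushSigma0_lt]; simp
    have c02 : (brushSigma0 m) ((0:Fin 3),j) < (brushSigma0 m) (2,j) := by
      rw [brushSigma0_lt]; simp
    have c12 : (brushSigma0 m) ((1:Fin 3),j) < (brushSigma0 m) (2,j) := by
      rw [brushSigma0_lt]; simp
    have c10 : ¬ (brushSigma0 m) ((1:Fin 3),j) < (brushSigma0 m) (0,j) := by
      rw [brushSigma0_lt]; simp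
    have c20 : ¬ (brushSigma0 m) ((2:Fin 3),j) < (brushSigma0 m) (0,j) := by
      rw [brushSigma0_lt]; simp
    have c21 : ¬ (brushSigma0 m) ((2:Fin 3),j) < (brushSigma0 m) (1,j) := by
      rw [brushSigma0_lt]; simp
    rw [if_pos c01, if_pos c02, if_pos c12, if_neg c10, if_neg c20, if_neg c21]
    by_cases h0 : j = 0
    · rw [if_pos h0,
        if_neg (fun hc : j = Fin.last (m+2) =>
          hlast0 ((h0 ▸ hc : (0:Fin (m+3)) = Fin.last (m+2))).symm)]
    · rw [if_neg h0]
      by_cases hl : j = Fin.last (m+2)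
      · rw [if_pos hl]
      · rw [if_neg hl]
  rw [Fintype.sum_prod_type]
  rw [Finset.sum_comm]
  have hcs : ∀ j : Fin (m+3), ∑ i : Fin 3,
      brushWeight (cycleGraph 3 □ cycleGraph (m+3)) (brushSigma0 m) (i,j) =
      4 * (if j = 0 then 1 else 0) + 2 * (if j = Fin.last (m+2) then 0 else 1) := by
    intro j
    rw [Fin.sum_univ_three]
    exact colsum j
  rw [Finset.sum_congr rfl (fun j _ => hcs j)]
  rw [Finset.sum_add_distrib, ← Finset.mul_sum, ← Finset.mul_sum]
  have s1 : ∑ j : Fin (m+3), (if j = 0 then (1:ℕ) else 0) = 1 := by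
    rw [Finset.sum_ite_eq' univ (0 : Fin (m+3)) (fun _ => (1:ℕ))]
    simp
  have s2 : ∑ j : Fin (m+3), (if j = Fin.last (m+2) then (0:ℕ) else 1) = m + 2 := by
    have hp : ∀ j : Fin (m+3), (if j = Fin.last (m+2) then (0:ℕ) else 1) +
        (if j = Fin.last (m+2) then (1:ℕ) else 0) = 1 := by
      intro j; by_cases h : j = Fin.last (m+2) <;> simp [h]
    have hsum : (∑ j : Fin (m+3), (if j = Fin.last (m+2) then (0:ℕ) else 1)) +
        (∑ j : Fin (m+3), (if j = Fin.last (m+2) then (1:ℕ) else 0)) = m + 3 := by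
      rw [← Finset.sum_add_distrib]
      calc _ = ∑ _j : Fin (m+3), (1:ℕ) := Finset.sum_congr rfl (fun j _ => hp j)
      _ = m + 3 := by simp
    have h2 : ∑ j : Fin (m+3), (if j = Fin.last (m+2) then (1:ℕ) else 0) = 1 := by
      rw [Finset.sum_ite_eq' univ (Fin.last (m+2)) (fun _ => (1:ℕ))]
      simp
    omega
  rw [s1, s2]
  ring

end BrushAux

/-- For every integer n ≥ 3, the brush number of C_3 × C_n equals 2n + 2. -/
theorem brushNumber_C3_torus (n : ℕ) (hn : 3 ≤ n) :
    brushNumber (cycleGraph 3 □ cycleGraph n) = 2 * n + 2 := by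
  obtain ⟨m, rfl⟩ : ∃ m, n = m + 3 := ⟨n - 3, by omega⟩
  rw [brushNumber]
  haveI : Nonempty ((Fin 3 × Fin (m+3)) ≃ Fin (Fintype.card (Fin 3 × Fin (m+3)))) :=
    ⟨brushSigma0 m⟩
  apply le_antisymm
  · exact (ciInf_le' _ (brushSigma0 m)).trans brush_upper_bound.le
  · exact le_ciInf (fun σ => brush_lower_bound σ)
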